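/- There exists a constant C > 0 such that for every j ∈ ℤ²\{0} with |j| ≥ 2, Σ_{k ∈ ℤ²\{0}, k ≠ j} 1/(|j-k|² |k|²) ≤ C·log|j|/|j|². -/

import Mathlib

open scoped BigOperators
open MeasureTheory

noncomputable section

/-- `|k|² = k₁² + k₂²` for a lattice point `k ∈ ℤ²`, as a real number. -/
def nsq (k : ℤ × ℤ) : ℝ := (k.1 : ℝ) ^ 2 + (k.2 : ℝ) ^ 2

/-- `k^⊥ = (k₂, -k₁)`. -/
def perp (k : ℤ × ℤ) : ℤ × ℤ := (k.2, -k.1)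

/-- Euclidean inner product of two lattice points, as a real number. -/
def dotR (a b : ℤ × ℤ) : ℝ := (a.1 : ℝ) * (b.1 : ℝ) + (a.2 : ℝ) * (b.2 : ℝ)

/-- `C_{k,l} = (k^⊥ · l)/|k|²`. -/
def Ckl (k l : ℤ × ℤ) : ℝ := dotR (perp k) l / nsq k

/-- `D_{k,l} = (k · l)/|k|²`. -/
def Dkl (k l : ℤ × ℤ) : ℝ := dotR k l / nsq k

/-- `Λ_N = {k ∈ ℤ²\{0} : |k| ≤ N}` as a finite set. -/
def ΛN (N : ℤ) : Finset (ℤ × ℤ) :=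
  (Finset.Icc (-N, -N) (N, N)).filter (fun k => k ≠ 0 ∧ k.1 ^ 2 + k.2 ^ 2 ≤ N ^ 2)

namespace DCE

/-- `|k|²` as a natural number. -/
def natsq (k : ℤ × ℤ) : ℕ := k.1.natAbs ^ 2 + k.2.natAbs ^ 2

/-- sup norm of `k`, as a natural number. -/
def kinf (k : ℤ × ℤ) : ℕ := max k.1.natAbs k.2.natAbs

lemma nsq_eq (k : ℤ × ℤ) : nsq k = (natsq k : ℝ) := by
  simp only [nsq, natsq]
  push_cast [Nat.cast_natAbs, Int.cast_abs, sq_abs]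
  ring

lemma kinf_sq_le (k : ℤ × ℤ) : kinf k ^ 2 ≤ natsq k := by
  unfold kinf natsq
  rcases max_choice k.1.natAbs k.2.natAbs with h | h <;> rw [h]
  · exact Nat.le_add_right _ _
  · exact Nat.le_add_left _ _

lemma natsq_le_two_kinf (k : ℤ × ℤ) : natsq k ≤ 2 * kinf k ^ 2 := by
  have h1 : k.1.natAbs ≤ kinf k := le_max_left _ _
  have h2 : k.2.natAbs ≤ kinf k := le_max_right _ _
  have := Nat.pow_le_pow_left h1 2
  have := Nat.pow_le_pow_left h2 2
  simp only [natsq]; omega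

lemma kinf_ne_zero {k : ℤ × ℤ} (h : k ≠ 0) : kinf k ≠ 0 := by
  intro h0
  apply h
  have h1 : k.1.natAbs = 0 ∧ k.2.natAbs = 0 := by
    have := le_max_left k.1.natAbs k.2.natAbs
    have := le_max_right k.1.natAbs k.2.natAbs
    unfold kinf at h0
    omega
  exact Prod.ext (Int.natAbs_eq_zero.mp h1.1) (Int.natAbs_eq_zero.mp h1.2)

lemma natsq_pos {k : ℤ × ℤ} (h : k ≠ 0) : 0 < natsq k := by
  have h1 := Nat.pos_of_ne_zero (kinf_ne_zero h)
  have h2 := kinf_sq_le k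
  nlinarith

lemma nsq_pos {k : ℤ × ℤ} (h : k ≠ 0) : 0 < nsq k := by
  rw [nsq_eq]; exact_mod_cast natsq_pos h

lemma tri1 (j k : ℤ × ℤ) : nsq j ≤ 2 * nsq k + 2 * nsq (j - k) := by
  simp only [nsq, Prod.fst_sub, Prod.snd_sub]
  push_cast
  nlinarith [sq_nonneg ((j.1 : ℝ) - 2 * (k.1 : ℝ)), sq_nonneg ((j.2 : ℝ) - 2 * (k.2 : ℝ))]

lemma tri2 (j k : ℤ × ℤ) : nsq k ≤ 2 * nsq j + 2 * nsq (j - k) := by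
  simp only [nsq, Prod.fst_sub, Prod.snd_sub]
  push_cast
  nlinarith [sq_nonneg (2 * (j.1 : ℝ) - (k.1 : ℝ)), sq_nonneg (2 * (j.2 : ℝ) - (k.2 : ℝ))]

lemma fiber_card (t : Finset (ℤ × ℤ)) (c : ℤ × ℤ) {m : ℕ} (hm : m ≠ 0) :
    (t.filter fun k => kinf (c - k) = m).card ≤ 8 * m := by
  classical
  calc (t.filter fun k => kinf (c - k) = m).card
      ≤ (Finset.box m : Finset (ℤ × ℤ)).card := by
        apply Finset.card_le_card_of_injOn (fun k => c - k)
        · intro k hk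
          rw [Finset.mem_coe, Finset.mem_filter] at hk
          exact Int.mem_box.mpr hk.2
        · intro a _ b _ hab
          exact sub_right_injective hab
      _ = 8 * m := Int.card_box hm

lemma fiber_card' (t : Finset (ℤ × ℤ)) {m : ℕ} (hm : m ≠ 0) :
    (t.filter fun k => kinf k = m).card ≤ 8 * m := by
  classical
  calc (t.filter fun k => kinf k = m).card
      ≤ (Finset.box m : Finset (ℤ × ℤ)).card := by
        apply Finset.card_le_card_of_injOn id
        · intro k hk
          rw [Finset.mem_coe, Finset.mem_filter] at hk
          exact Int.mem_box.mpr hk.2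
        · exact Function.Injective.injOn (fun a b h => h)
      _ = 8 * m := Int.card_box hm

lemma sum_le_grouped (t : Finset (ℤ × ℤ)) (φ : ℤ × ℤ → ℕ) (ψ : ℕ → ℝ)
    (hψ : ∀ m, 0 ≤ ψ m)
    (hcard : ∀ m ∈ t.image φ, ((t.filter fun k => φ k = m).card : ℝ) ≤ 8 * m) :
    ∑ k ∈ t, ψ (φ k) ≤ ∑ m ∈ t.image φ, 8 * (m : ℝ) * ψ m := by
  classical
  rw [Finset.sum_comp]
  refine Finset.sum_le_sum fun m hm => ?_
  rw [nsmul_eq_mul]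
  exact mul_le_mul_of_nonneg_right (hcard m hm) (hψ m)

lemma key (t : Finset (ℤ × ℤ)) (φ : ℤ × ℤ → ℕ) (G : ℤ × ℤ → ℝ) (ψ : ℕ → ℝ)
    (hψ : ∀ m, 0 ≤ ψ m)
    (hG : ∀ k ∈ t, G k ≤ ψ (φ k))
    (hcard : ∀ m ∈ t.image φ, ((t.filter fun k => φ k = m).card : ℝ) ≤ 8 * m)
    (lo hi : ℕ) (hrange : ∀ k ∈ t, φ k ∈ Finset.Icc lo hi) :
    ∑ k ∈ t, G k ≤ ∑ m ∈ Finset.Icc lo hi, 8 * (m : ℝ) * ψ m := by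
  classical
  calc ∑ k ∈ t, G k ≤ ∑ k ∈ t, ψ (φ k) := Finset.sum_le_sum hG
    _ ≤ ∑ m ∈ t.image φ, 8 * (m : ℝ) * ψ m := sum_le_grouped t φ ψ hψ hcard
    _ ≤ ∑ m ∈ Finset.Icc lo hi, 8 * (m : ℝ) * ψ m := by
        apply Finset.sum_le_sum_of_subset_of_nonneg
        · intro m hm
          rw [Finset.mem_image] at hm
          obtain ⟨k, hk, rfl⟩ := hm
          exact hrange k hk
        · intro m _ _
          exact mul_nonneg (by positivity) (hψ m)

lemma harm_bound (n : ℕ) : ∑ m ∈ Finset.Icc 1 n, ((m : ℝ))⁻¹ ≤ 1 + Real.log n := by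
  induction n with
  | zero => simp
  | succ n ih =>
    rcases Nat.eq_zero_or_pos n with rfl | hn
    · norm_num
    · rw [Finset.sum_Icc_succ_top (by omega)]
      have hn0 : (0 : ℝ) < n := by exact_mod_cast hn
      have hlog : Real.log n + ((n : ℝ) + 1)⁻¹ ≤ Real.log (n + 1) := by
        have hd := Real.log_le_sub_one_of_pos (x := (n : ℝ) / (n + 1)) (by positivity)
        rw [Real.log_div (by positivity) (by positivity)] at hd
        have : (n : ℝ) / (n + 1) - 1 = -((n : ℝ) + 1)⁻¹ := by field_simp; ring
        rw [this] at hd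
        linarith
      push_cast
      push_cast at ih hlog
      linarith

lemma tele_eq (g : ℕ → ℝ) : ∀ (b a : ℕ), a ≤ b + 1 →
    ∑ m ∈ Finset.Icc a b, (g m - g (m + 1)) = g a - g (b + 1) := by
  intro b
  induction b with
  | zero =>
    intro a ha
    interval_cases a
    · simp
    · simp
  | succ b ih =>
    intro a ha
    rcases Nat.lt_or_ge a (b + 2) with h | h
    · rw [Finset.sum_Icc_succ_top (by omega), ih a (by omega)]
      ring
    · have hab : b + 2 = a := le_antisymm h ha
      rw [Finset.Icc_eq_empty (by omega)]
      rw [← hab]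
      simp

lemma tele_bound (a b : ℕ) (ha : 1 ≤ a) :
    ∑ m ∈ Finset.Icc a b, 8 * (m : ℝ) * (4 * ((m : ℝ) ^ 4)⁻¹) ≤ 64 / (a : ℝ) ^ 2 := by
  set g : ℕ → ℝ := fun m => ((m : ℝ) ^ 2)⁻¹ with hg
  have ha0 : (0 : ℝ) < a := by exact_mod_cast ha
  rcases Nat.lt_or_ge b a with h | h
  · rw [Finset.Icc_eq_empty (by omega)]
    simp
    positivity
  · have step : ∀ m ∈ Finset.Icc a b, 8 * (m : ℝ) * (4 * ((m : ℝ) ^ 4)⁻¹)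
        ≤ 64 * (g m - g (m + 1)) := by
      intro m hm
      have hm1 : 1 ≤ m := le_trans ha (Finset.mem_Icc.mp hm).1
      have hm0 : (1 : ℝ) ≤ (m : ℝ) := by exact_mod_cast hm1
      have hmpos : (0 : ℝ) < (m : ℝ) := by linarith
      simp only [hg]
      push_cast
      rw [← sub_nonneg]
      have heq : 64 * (((m : ℝ) ^ 2)⁻¹ - (((m : ℝ) + 1) ^ 2)⁻¹)
          - 8 * (m : ℝ) * (4 * ((m : ℝ) ^ 4)⁻¹)
          = 32 * (m : ℝ) * (3 * (m : ℝ) ^ 2 - 1)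
            / ((m : ℝ) ^ 4 * ((m : ℝ) + 1) ^ 2) := by
        field_simp
        ring
      rw [heq]
      apply div_nonneg _ (by positivity)
      nlinarith
    calc ∑ m ∈ Finset.Icc a b, 8 * (m : ℝ) * (4 * ((m : ℝ) ^ 4)⁻¹)
        ≤ ∑ m ∈ Finset.Icc a b, 64 * (g m - g (m + 1)) := Finset.sum_le_sum step
      _ = 64 * (g a - g (b + 1)) := by rw [← Finset.mul_sum, tele_eq g b a (by omega)]
      _ ≤ 64 * g a := by
          have : 0 ≤ g (b + 1) := by simp only [hg]; positivity
          linarith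
      _ = 64 / (a : ℝ) ^ 2 := by simp [hg]; ring

end DCE

theorem discrete_convolution_estimate :
    ∃ C : ℝ, 0 < C ∧ ∀ j : ℤ × ℤ, j ≠ 0 → 2 ≤ Real.sqrt (nsq j) →
      ∑' k : {k : ℤ × ℤ // k ≠ 0 ∧ k ≠ j}, 1 / (nsq (j - k.1) * nsq k.1)
        ≤ C * Real.log (Real.sqrt (nsq j)) / nsq j := by
  classical
  refine ⟨512, by norm_num, ?_⟩
  intro j hj hj2
  set L := Real.log (Real.sqrt (nsq j)) with hLdef
  have h0j : (0 : ℝ) ≤ nsq j := by unfold nsq; positivity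
  have hsq : Real.sqrt (nsq j) ^ 2 = nsq j := Real.sq_sqrt h0j
  have hnsq4 : (4 : ℝ) ≤ nsq j := by nlinarith
  have hlog2 : Real.log 2 ≤ L := by
    rw [hLdef]
    exact Real.log_le_log (by norm_num) hj2
  have hLhalf : (1 / 2 : ℝ) ≤ L := by
    have := Real.log_two_gt_d9; linarith
  set n := DCE.natsq j with hndef
  have hnR : (n : ℝ) = nsq j := (DCE.nsq_eq j).symm
  have hn4 : 4 ≤ n := by
    have h4 : (4 : ℝ) ≤ (n : ℝ) := by rw [hnR]; exact hnsq4
    exact_mod_cast h4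
  have hnpos : (0 : ℝ) < (n : ℝ) := by
    have : 0 < n := by omega
    exact_mod_cast this
  have hlogn : Real.log (n : ℝ) = 2 * L := by
    rw [hnR, ← hsq, Real.log_pow, ← hLdef]
    push_cast
    ring
  rw [show (512 : ℝ) * L / nsq j = 512 * L / (n : ℝ) by rw [hnR]]
  apply tsum_le_of_sum_le' (div_nonneg (by linarith) hnpos.le)
  intro s
  have himg : ∑ k ∈ s.image Subtype.val, (1 / (nsq (j - k) * nsq k)) =
      ∑ i ∈ s, 1 / (nsq (j - i.1) * nsq i.1) :=
    Finset.sum_image (fun x _ y _ h => Subtype.ext h)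
  rw [← himg]
  set t := s.image Subtype.val with htdef
  have ht : ∀ k ∈ t, k ≠ 0 ∧ k ≠ j := by
    intro k hk
    rw [htdef, Finset.mem_image] at hk
    obtain ⟨x, _, rfl⟩ := hk
    exact x.2
  rw [← Finset.sum_filter_add_sum_filter_not t (fun k => 4 * (n : ℝ) ≤ nsq k)]
  rw [← Finset.sum_filter_add_sum_filter_not
      (t.filter (fun k => ¬ (4 * (n : ℝ) ≤ nsq k))) (fun k => nsq k ≤ nsq (j - k))]
  set t1 := t.filter (fun k => 4 * (n : ℝ) ≤ nsq k) with ht1def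
  set t23 := t.filter (fun k => ¬ (4 * (n : ℝ) ≤ nsq k)) with ht23def
  set t2 := t23.filter (fun k => nsq k ≤ nsq (j - k)) with ht2def
  set t3 := t23.filter (fun k => ¬ (nsq k ≤ nsq (j - k))) with ht3def
  -- auxiliary facts
  have hkinfsq : ∀ k : ℤ × ℤ, ((DCE.kinf k : ℝ)) ^ 2 ≤ nsq k := by
    intro k
    rw [DCE.nsq_eq]
    exact_mod_cast DCE.kinf_sq_le k
  -- Bound on the far region t1
  have hb1 : ∑ k ∈ t1, (1 / (nsq (j - k) * nsq k)) ≤ 256 * L / (n : ℝ) := by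
    set m0 := Nat.sqrt (2 * n) with hm0def
    have hm02 : 2 ≤ m0 := by
      exact Nat.le_sqrt.mpr (by omega)
    have hm0n : (n : ℝ) ≤ 2 * (m0 : ℝ) ^ 2 := by
      have h1 : 2 * n < (m0 + 1) * (m0 + 1) := Nat.lt_succ_sqrt (2 * n)
      have h2 : 1 ≤ m0 := by omega
      have h3 : n ≤ 2 * m0 ^ 2 := by nlinarith
      exact_mod_cast h3
    have hkey := DCE.key t1 DCE.kinf (fun k => 1 / (nsq (j - k) * nsq k))
      (fun m => 4 * ((m : ℝ) ^ 4)⁻¹) (fun m => by positivity)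
      (by
        intro k hk
        obtain ⟨hkt, hfar⟩ := Finset.mem_filter.mp hk
        obtain ⟨hk0, hkj⟩ := ht k hkt
        have hpos : 0 < nsq k := DCE.nsq_pos hk0
        have htr := DCE.tri2 j k
        have hjn : nsq j = (n : ℝ) := hnR.symm
        have hjk : nsq k / 4 ≤ nsq (j - k) := by
          rw [hjn] at htr
          linarith
        have hkinf := hkinfsq k
        have hkinfpos : (0 : ℝ) < (DCE.kinf k : ℝ) := by
          exact_mod_cast Nat.pos_of_ne_zero (DCE.kinf_ne_zero hk0)
        calc 1 / (nsq (j - k) * nsq k) ≤ 1 / ((nsq k / 4) * nsq k) := by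
              apply one_div_le_one_div_of_le (by positivity)
              exact mul_le_mul_of_nonneg_right hjk hpos.le
          _ = 4 / (nsq k) ^ 2 := by field_simp
          _ ≤ 4 / (((DCE.kinf k : ℝ)) ^ 2) ^ 2 := by
              gcongr
          _ = 4 * (((DCE.kinf k : ℝ)) ^ 4)⁻¹ := by
              rw [div_eq_mul_inv, ← pow_mul]
        )
      (by
        intro m hm
        rw [Finset.mem_image] at hm
        obtain ⟨k, hk, rfl⟩ := hm
        have hk0 := (ht k (Finset.mem_filter.mp hk).1).1
        exact_mod_cast DCE.fiber_card' t1 (DCE.kinf_ne_zero hk0))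
      m0 (t1.sup DCE.kinf)
      (by
        intro k hk
        rw [Finset.mem_Icc]
        obtain ⟨hkt, hfar⟩ := Finset.mem_filter.mp hk
        constructor
        · have h4n : 4 * n ≤ DCE.natsq k := by
            have hc : ((4 * n : ℕ) : ℝ) ≤ (DCE.natsq k : ℝ) := by
              rw [← DCE.nsq_eq]; push_cast; exact hfar
            exact_mod_cast hc
          have h2k := DCE.natsq_le_two_kinf k
          have h2n : 2 * n ≤ DCE.kinf k ^ 2 := by omega
          calc m0 ≤ Nat.sqrt (DCE.kinf k ^ 2) := Nat.sqrt_le_sqrt h2n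
            _ = DCE.kinf k := by rw [pow_two]; exact Nat.sqrt_eq _
        · exact Finset.le_sup hk)
    calc ∑ k ∈ t1, (1 / (nsq (j - k) * nsq k))
        ≤ ∑ m ∈ Finset.Icc m0 (t1.sup DCE.kinf), 8 * (m : ℝ) * (4 * ((m : ℝ) ^ 4)⁻¹) := hkey
      _ ≤ 64 / (m0 : ℝ) ^ 2 := DCE.tele_bound m0 _ (by omega)
      _ ≤ 128 / (n : ℝ) := by
          rw [div_le_div_iff₀ (by positivity) hnpos]
          nlinarith
      _ ≤ 256 * L / (n : ℝ) := by
          gcongr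
          linarith
  -- Bound on the region t2 (k closer to 0)
  have hb2 : ∑ k ∈ t2, (1 / (nsq (j - k) * nsq k)) ≤ 128 * L / (n : ℝ) := by
    have hkey := DCE.key t2 DCE.kinf (fun k => 1 / (nsq (j - k) * nsq k))
      (fun m => 4 / (n : ℝ) * ((m : ℝ) ^ 2)⁻¹) (fun m => by positivity)
      (by
        intro k hk
        obtain ⟨hk23, hP2⟩ := Finset.mem_filter.mp hk
        obtain ⟨hkt, hnotfar⟩ := Finset.mem_filter.mp hk23
        obtain ⟨hk0, hkj⟩ := ht k hkt
        have hpos : 0 < nsq k := DCE.nsq_pos hk0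
        have htr := DCE.tri1 j k
        have hjn : nsq j = (n : ℝ) := hnR.symm
        have hjk4 : (n : ℝ) / 4 ≤ nsq (j - k) := by
          rw [hjn] at htr
          linarith
        have hjkpos : (0 : ℝ) < nsq (j - k) := by linarith
        have hkinf := hkinfsq k
        have hkinfpos : (0 : ℝ) < (DCE.kinf k : ℝ) := by
          exact_mod_cast Nat.pos_of_ne_zero (DCE.kinf_ne_zero hk0)
        calc 1 / (nsq (j - k) * nsq k) = (1 / nsq (j - k)) * (1 / nsq k) := by
              rw [one_div_mul_one_div]
          _ ≤ (4 / (n : ℝ)) * (1 / nsq k) := by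
              apply mul_le_mul_of_nonneg_right _ (by positivity)
              rw [div_le_div_iff₀ hjkpos hnpos]
              linarith
          _ ≤ (4 / (n : ℝ)) * (1 / ((DCE.kinf k : ℝ)) ^ 2) := by
              apply mul_le_mul_of_nonneg_left _ (by positivity)
              exact one_div_le_one_div_of_le (by positivity) hkinf
          _ = 4 / (n : ℝ) * (((DCE.kinf k : ℝ)) ^ 2)⁻¹ := by
              rw [one_div]
        )
      (by
        intro m hm
        rw [Finset.mem_image] at hm
        obtain ⟨k, hk, rfl⟩ := hm
        have hk0 := (ht k (Finset.mem_filter.mp (Finset.mem_filter.mp hk).1).1).1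
        exact_mod_cast DCE.fiber_card' t2 (DCE.kinf_ne_zero hk0))
      1 n
      (by
        intro k hk
        obtain ⟨hk23, hP2⟩ := Finset.mem_filter.mp hk
        obtain ⟨hkt, hnotfar⟩ := Finset.mem_filter.mp hk23
        obtain ⟨hk0, hkj⟩ := ht k hkt
        rw [Finset.mem_Icc]
        constructor
        · exact Nat.pos_of_ne_zero (DCE.kinf_ne_zero hk0)
        · have h4n : DCE.natsq k ≤ 4 * n := by
            have hlt : nsq k < 4 * (n : ℝ) := not_le.mp hnotfar
            have hc : (DCE.natsq k : ℝ) ≤ ((4 * n : ℕ) : ℝ) := by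
              rw [← DCE.nsq_eq]; push_cast; linarith
            exact_mod_cast hc
          have h1 := DCE.kinf_sq_le k
          by_contra hcon
          push_neg at hcon
          have h2 : (n + 1) ^ 2 ≤ DCE.kinf k ^ 2 := Nat.pow_le_pow_left hcon 2
          nlinarith)
    calc ∑ k ∈ t2, (1 / (nsq (j - k) * nsq k))
        ≤ ∑ m ∈ Finset.Icc 1 n, 8 * (m : ℝ) * (4 / (n : ℝ) * ((m : ℝ) ^ 2)⁻¹) := hkey
      _ = 32 / (n : ℝ) * ∑ m ∈ Finset.Icc 1 n, ((m : ℝ))⁻¹ := by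
          rw [Finset.mul_sum]
          apply Finset.sum_congr rfl
          intro m hm
          have hm1 : 1 ≤ m := (Finset.mem_Icc.mp hm).1
          have hm0 : (0 : ℝ) < (m : ℝ) := by exact_mod_cast hm1
          field_simp
          ring
      _ ≤ 32 / (n : ℝ) * (1 + Real.log n) := by
          apply mul_le_mul_of_nonneg_left (DCE.harm_bound n) (by positivity)
      _ ≤ 128 * L / (n : ℝ) := by
          rw [hlogn]
          have h1 : (1 : ℝ) + 2 * L ≤ 4 * L := by linarith
          calc 32 / (n : ℝ) * (1 + 2 * L) ≤ 32 / (n : ℝ) * (4 * L) := by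
                apply mul_le_mul_of_nonneg_left h1 (by positivity)
            _ = 128 * L / (n : ℝ) := by ring
  -- Bound on the region t3 (k closer to j)
  have hb3 : ∑ k ∈ t3, (1 / (nsq (j - k) * nsq k)) ≤ 128 * L / (n : ℝ) := by
    have hkey := DCE.key t3 (fun k => DCE.kinf (j - k)) (fun k => 1 / (nsq (j - k) * nsq k))
      (fun m => 4 / (n : ℝ) * ((m : ℝ) ^ 2)⁻¹) (fun m => by positivity)
      (by
        intro k hk
        obtain ⟨hk23, hnP2⟩ := Finset.mem_filter.mp hk
        obtain ⟨hkt, hnotfar⟩ := Finset.mem_filter.mp hk23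
        obtain ⟨hk0, hkj⟩ := ht k hkt
        have hjk0 : j - k ≠ 0 := sub_ne_zero_of_ne (Ne.symm hkj)
        have hjkpos : 0 < nsq (j - k) := DCE.nsq_pos hjk0
        have hP2' : nsq (j - k) < nsq k := not_le.mp hnP2
        have hpos : 0 < nsq k := DCE.nsq_pos hk0
        have htr := DCE.tri1 j k
        have hjn : nsq j = (n : ℝ) := hnR.symm
        have hk4 : (n : ℝ) / 4 ≤ nsq k := by
          rw [hjn] at htr
          linarith
        have hkinf := hkinfsq (j - k)
        have hkinfpos : (0 : ℝ) < (DCE.kinf (j - k) : ℝ) := by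
          exact_mod_cast Nat.pos_of_ne_zero (DCE.kinf_ne_zero hjk0)
        calc 1 / (nsq (j - k) * nsq k) = (1 / nsq k) * (1 / nsq (j - k)) := by
              rw [one_div_mul_one_div, mul_comm (nsq k)]
          _ ≤ (4 / (n : ℝ)) * (1 / nsq (j - k)) := by
              apply mul_le_mul_of_nonneg_right _ (by positivity)
              rw [div_le_div_iff₀ hpos hnpos]
              linarith
          _ ≤ (4 / (n : ℝ)) * (1 / ((DCE.kinf (j - k) : ℝ)) ^ 2) := by
              apply mul_le_mul_of_nonneg_left _ (by positivity)
              exact one_div_le_one_div_of_le (by positivity) hkinf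
          _ = 4 / (n : ℝ) * (((DCE.kinf (j - k) : ℝ)) ^ 2)⁻¹ := by
              rw [one_div]
        )
      (by
        intro m hm
        rw [Finset.mem_image] at hm
        obtain ⟨k, hk, rfl⟩ := hm
        have hkj := (ht k (Finset.mem_filter.mp (Finset.mem_filter.mp hk).1).1).2
        have hjk0 : j - k ≠ 0 := sub_ne_zero_of_ne (Ne.symm hkj)
        exact_mod_cast DCE.fiber_card t3 j (DCE.kinf_ne_zero hjk0))
      1 n
      (by
        intro k hk
        obtain ⟨hk23, hnP2⟩ := Finset.mem_filter.mp hk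
        obtain ⟨hkt, hnotfar⟩ := Finset.mem_filter.mp hk23
        obtain ⟨hk0, hkj⟩ := ht k hkt
        have hjk0 : j - k ≠ 0 := sub_ne_zero_of_ne (Ne.symm hkj)
        rw [Finset.mem_Icc]
        constructor
        · exact Nat.pos_of_ne_zero (DCE.kinf_ne_zero hjk0)
        · have hP2' : nsq (j - k) < nsq k := not_le.mp hnP2
          have h4n : DCE.natsq (j - k) ≤ 4 * n := by
            have hlt : nsq k < 4 * (n : ℝ) := not_le.mp hnotfar
            have hc : (DCE.natsq (j - k) : ℝ) ≤ ((4 * n : ℕ) : ℝ) := by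
              rw [← DCE.nsq_eq]; push_cast; linarith
            exact_mod_cast hc
          have h1 := DCE.kinf_sq_le (j - k)
          by_contra hcon
          push_neg at hcon
          have h2 : (n + 1) ^ 2 ≤ DCE.kinf (j - k) ^ 2 := Nat.pow_le_pow_left hcon 2
          nlinarith)
    calc ∑ k ∈ t3, (1 / (nsq (j - k) * nsq k))
        ≤ ∑ m ∈ Finset.Icc 1 n, 8 * (m : ℝ) * (4 / (n : ℝ) * ((m : ℝ) ^ 2)⁻¹) := hkey
      _ = 32 / (n : ℝ) * ∑ m ∈ Finset.Icc 1 n, ((m : ℝ))⁻¹ := by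
          rw [Finset.mul_sum]
          apply Finset.sum_congr rfl
          intro m hm
          have hm1 : 1 ≤ m := (Finset.mem_Icc.mp hm).1
          have hm0 : (0 : ℝ) < (m : ℝ) := by exact_mod_cast hm1
          field_simp
          ring
      _ ≤ 32 / (n : ℝ) * (1 + Real.log n) := by
          apply mul_le_mul_of_nonneg_left (DCE.harm_bound n) (by positivity)
      _ ≤ 128 * L / (n : ℝ) := by
          rw [hlogn]
          have h1 : (1 : ℝ) + 2 * L ≤ 4 * L := by linarith
          calc 32 / (n : ℝ) * (1 + 2 * L) ≤ 32 / (n : ℝ) * (4 * L) := by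
                apply mul_le_mul_of_nonneg_left h1 (by positivity)
            _ = 128 * L / (n : ℝ) := by ring
  have hfinal : (256 : ℝ) * L / n + (128 * L / n + 128 * L / n) = 512 * L / n := by ring
  linarith
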